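/- (Necessary condition for saturating the squeezing bound.) Let A and D be real 2n×2n matrices such that Ã := −(A + Aᵀ) is positive definite and D is symmetric positive semidefinite with largest eigenvalue δ₁↓ > 0; let α₁↑ be the smallest eigenvalue of Ã. Suppose σ is a real symmetric positive definite 2n×2n matrix satisfying Aσ + σAᵀ + D ≥ 0 whose largest eigenvalue equals δ₁↓/α₁↑, and let v be a unit eigenvector of σ for this largest eigenvalue. Then v is simultaneously an eigenvector of Ã with eigenvalue α₁↑ and an eigenvector of D with eigenvalue δ₁↓. -/

import Mathlib

open Matrix
open scoped ComplexOrder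

open Classical in
/-- The eigenvalues of a matrix in increasing order (junk value `0` if not Hermitian). -/
noncomputable def eigUp {d : ℕ} (M : Matrix (Fin d) (Fin d) ℝ) : Fin d → ℝ :=
  if h : M.IsHermitian then h.eigenvalues ∘ Tuple.sort h.eigenvalues else 0

/-- The eigenvalues of a matrix in decreasing order. -/
noncomputable def eigDown {d : ℕ} (M : Matrix (Fin d) (Fin d) ℝ) (j : Fin d) : ℝ :=
  eigUp M j.rev

/-- The standard symplectic form on `2n` canonical variables: block diagonal with
blocks `[[0,1],[-1,0]]`. -/
def Omega (n : ℕ) : Matrix (Fin (2*n)) (Fin (2*n)) ℝ :=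
  Matrix.of fun i j =>
    if (i : ℕ) + 1 = (j : ℕ) ∧ (i : ℕ) % 2 = 0 then 1
    else if (j : ℕ) + 1 = (i : ℕ) ∧ (j : ℕ) % 2 = 0 then -1 else 0

/-- Partial transposition matrix `T = 𝟙₂^{⊕ l} ⊕ σz^{⊕ (n-l)}` for the bipartition of the
first `l` versus the last `n - l` modes. -/
def Tmat (n l : ℕ) : Matrix (Fin (2*n)) (Fin (2*n)) ℝ :=
  Matrix.diagonal fun i => if (i : ℕ) / 2 < l ∨ (i : ℕ) % 2 = 0 then 1 else -1

/-- The partially transposed symplectic form `Ω̃ = T Ω T`. -/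
def OmegaPT (n l : ℕ) : Matrix (Fin (2*n)) (Fin (2*n)) ℝ :=
  Tmat n l * Omega n * Tmat n l

open Classical in
/-- The positive square root of a positive semidefinite matrix (junk value `0` otherwise). -/
noncomputable def msqrt {d : ℕ} (M : Matrix (Fin d) (Fin d) ℝ) : Matrix (Fin d) (Fin d) ℝ :=
  if h : M.PosSemidef then
    h.1.eigenvectorUnitary.1 * diagonal ((↑) ∘ (√·) ∘ h.1.eigenvalues) *
      (star h.1.eigenvectorUnitary : Matrix (Fin d) (Fin d) ℝ)
  else 0

/-- `σ + iΩ ≥ 0`: the Robertson–Schrödinger condition for a real symmetric matrix `σ`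
to be a bona fide covariance matrix. -/
def IsCM (n : ℕ) (σ : Matrix (Fin (2*n)) (Fin (2*n)) ℝ) : Prop :=
  σ.IsSymm ∧
    (σ.map (Complex.ofReal ·) + Complex.I • (Omega n).map (Complex.ofReal ·)).PosSemidef

/-- `ν̃₋²`, the square of the smallest partially transposed symplectic eigenvalue of `σ`, for
the bipartition of the first `l` versus the remaining modes: the smallest eigenvalue of
`σ^{1/2} Ω̃ᵀ σ Ω̃ σ^{1/2}`. -/
noncomputable def nuSq (n l : ℕ) (σ : Matrix (Fin (2*n)) (Fin (2*n)) ℝ) : ℝ :=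
  sInf (spectrum ℝ (msqrt σ * (OmegaPT n l)ᵀ * σ * OmegaPT n l * msqrt σ))

/-- `ν̃₋`, the smallest partially transposed symplectic eigenvalue of `σ`. -/
noncomputable def nuMin (n l : ℕ) (σ : Matrix (Fin (2*n)) (Fin (2*n)) ℝ) : ℝ :=
  Real.sqrt (nuSq n l σ)

/-- The logarithmic negativity `E_N(σ) = max (0, −log₂ ν̃₋)`. -/
noncomputable def logNeg (n l : ℕ) (σ : Matrix (Fin (2*n)) (Fin (2*n)) ℝ) : ℝ :=
  max 0 (-(Real.logb 2 (nuMin n l σ)))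

section Aux
open Matrix

variable {d : ℕ}

lemma eigUp_eq {M : Matrix (Fin d) (Fin d) ℝ} (hM : M.IsHermitian) :
    eigUp M = hM.eigenvalues ∘ Tuple.sort hM.eigenvalues := by
  rw [eigUp, dif_pos hM]

lemma eigUp_le_eigenvalues {M : Matrix (Fin d) (Fin d) ℝ} (hM : M.IsHermitian)
    (h0 : 0 < d) (i : Fin d) : eigUp M ⟨0, h0⟩ ≤ hM.eigenvalues i := by
  rw [eigUp_eq hM]
  have := Tuple.monotone_sort hM.eigenvalues
    (a := ⟨0, h0⟩) (b := (Tuple.sort hM.eigenvalues).symm i) (by simp [Fin.le_def])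
  simpa using this

lemma eigenvalues_le_eigDown {M : Matrix (Fin d) (Fin d) ℝ} (hM : M.IsHermitian)
    (h0 : 0 < d) (i : Fin d) : hM.eigenvalues i ≤ eigDown M ⟨0, h0⟩ := by
  rw [eigDown, eigUp_eq hM]
  have := Tuple.monotone_sort hM.eigenvalues
    (a := (Tuple.sort hM.eigenvalues).symm i) (b := Fin.rev ⟨0, h0⟩)
    (by simp [Fin.le_def, Fin.rev]; omega)
  simpa using this

lemma eigUp_mem {M : Matrix (Fin d) (Fin d) ℝ} (hM : M.IsHermitian) (j : Fin d) :
    ∃ i, eigUp M j = hM.eigenvalues i := by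
  rw [eigUp_eq hM]; exact ⟨Tuple.sort hM.eigenvalues j, rfl⟩

lemma sub_smul_one_posSemidef {M : Matrix (Fin d) (Fin d) ℝ} (hM : M.IsHermitian)
    {c : ℝ} (h : ∀ i, c ≤ hM.eigenvalues i) : (M - c • 1).PosSemidef := by
  have key : M - c • 1 = (hM.eigenvectorUnitary : Matrix (Fin d) (Fin d) ℝ) *
      diagonal (fun i => hM.eigenvalues i - c) *
      (star hM.eigenvectorUnitary : Matrix (Fin d) (Fin d) ℝ) := by
    have hU : (hM.eigenvectorUnitary : Matrix (Fin d) (Fin d) ℝ) *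
        (star hM.eigenvectorUnitary : Matrix (Fin d) (Fin d) ℝ) = 1 :=
      Matrix.mem_unitaryGroup_iff.mp hM.eigenvectorUnitary.2
    have hco : diagonal (RCLike.ofReal ∘ hM.eigenvalues) = diagonal hM.eigenvalues := by
      congr 1
    conv_lhs => rw [hM.spectral_theorem, hco]
    rw [show diagonal (fun i => hM.eigenvalues i - c) = diagonal hM.eigenvalues - c • 1 by
      rw [smul_one_eq_diagonal, diagonal_sub]]
    rw [mul_sub, sub_mul, mul_smul_comm, mul_one, smul_mul_assoc, hU, Unitary.conjStarAlgAut_apply]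
  rw [key]
  exact (posSemidef_diagonal_iff.mpr fun i => by simpa using h i).mul_mul_conjTranspose_same _

lemma smul_one_sub_posSemidef {M : Matrix (Fin d) (Fin d) ℝ} (hM : M.IsHermitian)
    {c : ℝ} (h : ∀ i, hM.eigenvalues i ≤ c) : (c • 1 - M).PosSemidef := by
  have key : c • (1 : Matrix (Fin d) (Fin d) ℝ) - M =
      (hM.eigenvectorUnitary : Matrix (Fin d) (Fin d) ℝ) *
      diagonal (fun i => c - hM.eigenvalues i) *
      (star hM.eigenvectorUnitary : Matrix (Fin d) (Fin d) ℝ) := by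
    have hU : (hM.eigenvectorUnitary : Matrix (Fin d) (Fin d) ℝ) *
        (star hM.eigenvectorUnitary : Matrix (Fin d) (Fin d) ℝ) = 1 :=
      Matrix.mem_unitaryGroup_iff.mp hM.eigenvectorUnitary.2
    have hco : diagonal (RCLike.ofReal ∘ hM.eigenvalues) = diagonal hM.eigenvalues := by
      congr 1
    conv_lhs => rw [hM.spectral_theorem, hco]
    rw [show diagonal (fun i => c - hM.eigenvalues i) = c • 1 - diagonal hM.eigenvalues by
      rw [smul_one_eq_diagonal, diagonal_sub]]
    rw [mul_sub, sub_mul, mul_smul_comm, mul_one, smul_mul_assoc, hU, Unitary.conjStarAlgAut_apply]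
  rw [key]
  exact (posSemidef_diagonal_iff.mpr fun i => by simpa using h i).mul_mul_conjTranspose_same _

end Aux

/-- **Necessary condition for saturating the squeezing bound.**
If `Ã := −(A + Aᵀ)` is positive definite, `D ≥ 0` with `δ₁↓ > 0`, and a symmetric positive
definite `σ` satisfying `Aσ + σAᵀ + D ≥ 0` has largest eigenvalue exactly `δ₁↓/α₁↑`, then any
unit eigenvector `v` of `σ` for this eigenvalue is simultaneously an eigenvector of `Ã` with
eigenvalue `α₁↑` and of `D` with eigenvalue `δ₁↓`. -/
theorem squeezing_saturation_necessary_condition (n : ℕ) (hn : 1 ≤ n)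
    (A D σ : Matrix (Fin (2*n)) (Fin (2*n)) ℝ)
    (hA : (-(A + Aᵀ)).PosDef) (hD : D.PosSemidef)
    (hδpos : 0 < eigDown D ⟨0, by omega⟩)
    (hσsym : σ.IsSymm) (hσpd : σ.PosDef)
    (hLyap : (A * σ + σ * Aᵀ + D).PosSemidef)
    (hmax : eigDown σ ⟨0, by omega⟩ =
      eigDown D ⟨0, by omega⟩ / eigUp (-(A + Aᵀ)) ⟨0, by omega⟩)
    (v : Fin (2*n) → ℝ) (hv : v ⬝ᵥ v = 1)
    (hev : σ *ᵥ v = eigDown σ ⟨0, by omega⟩ • v) :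
    (-(A + Aᵀ)) *ᵥ v = eigUp (-(A + Aᵀ)) ⟨0, by omega⟩ • v ∧
      D *ᵥ v = eigDown D ⟨0, by omega⟩ • v := by

  have h2n : 0 < 2*n := by omega
  set At := -(A + Aᵀ) with hAt
  set α := eigUp At ⟨0, h2n⟩ with hα
  set δ := eigDown D ⟨0, h2n⟩ with hδ
  set s := eigDown σ ⟨0, h2n⟩ with hs
  have hAherm : At.IsHermitian := hA.isHermitian
  have hDherm : D.IsHermitian := hD.isHermitian
  -- positivity of α
  have hαpos : 0 < α := by
    obtain ⟨i, hi⟩ := eigUp_mem hAherm ⟨0, h2n⟩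
    rw [hα, hi]
    exact hA.eigenvalues_pos i
  have hspos : 0 < s := by
    rw [hmax]
    exact div_pos hδpos hαpos
  -- quadratic forms
  set a := v ⬝ᵥ (At *ᵥ v) with ha
  set dq := v ⬝ᵥ (D *ᵥ v) with hdq
  have hP1 : (At - α • 1).PosSemidef :=
    sub_smul_one_posSemidef hAherm (fun i => eigUp_le_eigenvalues hAherm h2n i)
  have hP2 : (δ • 1 - D).PosSemidef :=
    smul_one_sub_posSemidef hDherm (fun i => eigenvalues_le_eigDown hDherm h2n i)
  have hq1 : v ⬝ᵥ ((At - α • 1) *ᵥ v) = a - α := by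
    rw [sub_mulVec, dotProduct_sub, smul_mulVec, one_mulVec, dotProduct_smul,
      smul_eq_mul, hv, mul_one]
  have hq2 : v ⬝ᵥ ((δ • 1 - D) *ᵥ v) = δ - dq := by
    rw [sub_mulVec, dotProduct_sub, smul_mulVec, one_mulVec, dotProduct_smul,
      smul_eq_mul, hv, mul_one]
  have hav : α ≤ a := by
    have := hP1.dotProduct_mulVec_nonneg v
    rw [star_trivial, hq1] at this
    linarith
  have hdv : dq ≤ δ := by
    have := hP2.dotProduct_mulVec_nonneg v
    rw [star_trivial, hq2] at this
    linarith
  -- Lyapunov quadratic form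
  have htT : v ⬝ᵥ (Aᵀ *ᵥ v) = v ⬝ᵥ (A *ᵥ v) := by
    rw [mulVec_transpose, dotProduct_comm, ← dotProduct_mulVec]
  have haA : a = -(2 * (v ⬝ᵥ (A *ᵥ v))) := by
    rw [ha, hAt, neg_mulVec, dotProduct_neg, add_mulVec, dotProduct_add, htT]
    ring
  have hσv : v ᵥ* σ = s • v := by
    have : σᵀ *ᵥ v = s • v := by rw [hσsym.eq, hev]
    rw [← this, mulVec_transpose]
  have hLq : 0 ≤ -(s * a) + dq := by
    have h0 := hLyap.dotProduct_mulVec_nonneg v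
    rw [star_trivial] at h0
    have e1 : v ⬝ᵥ ((A * σ) *ᵥ v) = s * (v ⬝ᵥ (A *ᵥ v)) := by
      rw [← mulVec_mulVec, hev, mulVec_smul, dotProduct_smul, smul_eq_mul]
    have e2 : v ⬝ᵥ ((σ * Aᵀ) *ᵥ v) = s * (v ⬝ᵥ (A *ᵥ v)) := by
      rw [← mulVec_mulVec, dotProduct_mulVec, hσv, smul_dotProduct, smul_eq_mul, htT]
    rw [add_mulVec, add_mulVec, dotProduct_add, dotProduct_add, e1, e2, ← hdq] at h0
    rw [haA]
    linarith
  -- chain of equalities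
  have hδeq : δ = s * α := by
    rw [hmax]
    field_simp
  have hae : a = α := by
    nlinarith
  have hde : dq = δ := by nlinarith
  constructor
  · have hz : (At - α • 1) *ᵥ v = 0 := by
      rw [← hP1.dotProduct_mulVec_zero_iff v, star_trivial, hq1, hae, sub_self]
    rw [sub_mulVec, smul_mulVec, one_mulVec, sub_eq_zero] at hz
    exact hz
  · have hz : (δ • 1 - D) *ᵥ v = 0 := by
      rw [← hP2.dotProduct_mulVec_zero_iff v, star_trivial, hq2, hde, sub_self]
    rw [sub_mulVec, smul_mulVec, one_mulVec, sub_eq_zero] at hz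
    exact hz.symm
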